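/- arXiv:2005.00240 — 3 statements merged into one kernel-verified Lean document; each statement's English description precedes it below -/
import Mathlib

section
/- Let X_2, X_3, ... and Y_2, Y_3, ... be mutually independent random variables with E[X_k] = E[Y_k] = 0, E[X_k^2] = E[Y_k^2] = 1 and |X_k| ≤ M almost surely, where Y_n takes the values N_n, 0, −N_n with probabilities p_n := 1/(2N_n^2), 1 − 2p_n, p_n respectively, and N_n ≥ 1. Form the triangular array X_{1,n} := Y_n/√n, X_{k,n} := X_k/√n (2 ≤ k ≤ n), with zero boundary g_{k,n} ≡ 0, S_{k,n} := X_{1,n}+...+X_{k,n}, T_n := inf{k ≥ 1 : S_{k,n} ≤ 0}, and E_n := E[S_{n,n}; T_n > n]. If N_n > (n−1)M for all n, then the array satisfies the Lindeberg condition, the events {T_n > n} and {Y_n = N_n} coincide, E_n = P(Y_n = N_n) · N_n/√n, and P(T_n > n) = o(E_n) as n → ∞. -/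
open MeasureTheory ProbabilityTheory Filter

noncomputable section

/-- Partial sums `S_k = X_1 + … + X_k`. -/
def psum {Ω : Type*} (X : ℕ → Ω → ℝ) (k : ℕ) (ω : Ω) : ℝ :=
  ∑ i ∈ Finset.Icc 1 k, X i ω

/-- First crossing time `T = inf {k : 1 ≤ k ≤ n, S_k ≤ g_k}`, with the value `n + 1`
if no crossing occurs up to time `n`. -/
def fpt {Ω : Type*} (n : ℕ) (S : ℕ → Ω → ℝ) (g : ℕ → ℝ) (ω : Ω) : ℕ :=
  sInf ({k | 1 ≤ k ∧ k ≤ n ∧ S k ω ≤ g k} ∪ {n + 1})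

/-- The triangular array of Example 1: `X_{1,n} = Y_n/√n` and `X_{k,n} = X_k/√n`
for `2 ≤ k ≤ n`. -/
def exRow {Ω : Type*} (X Y : ℕ → Ω → ℝ) (n i : ℕ) (ω : Ω) : ℝ :=
  if i = 1 then Y n ω / Real.sqrt n else X i ω / Real.sqrt n

/-- Example 1: the array `X_{1,n} = Y_n/√n`, `X_{k,n} = X_k/√n`
(with `Y_n` a symmetric three-point variable on `{-N_n, 0, N_n}` and `N_n > (n-1)M`)
satisfies the Lindeberg condition, `{T_n > n} = {Y_n = N_n}`,
`E_n = P(Y_n = N_n) N_n / √n`, and `P(T_n > n) = o(E_n)`. -/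
theorem stmt_7 {Ω : Type*} [MeasureSpace Ω] [IsProbabilityMeasure (ℙ : Measure Ω)]
    (X Y : ℕ → Ω → ℝ) (M : ℝ) (Nn : ℕ → ℝ)
    (hmeas : ∀ k, Measurable (X k)) (hmeasY : ∀ k, Measurable (Y k))
    (hind : iIndepFun (Sum.elim X Y) ℙ)
    (hmean : ∀ k, 2 ≤ k → ∫ ω, X k ω = 0)
    (hvar : ∀ k, 2 ≤ k → ∫ ω, (X k ω) ^ 2 = 1)
    (hbdd : ∀ k, 2 ≤ k → ∀ᵐ ω ∂ℙ, |X k ω| ≤ M)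
    (hmeanY : ∀ n, 2 ≤ n → ∫ ω, Y n ω = 0)
    (hvarY : ∀ n, 2 ≤ n → ∫ ω, (Y n ω) ^ 2 = 1)
    (hN : ∀ n, 1 ≤ Nn n)
    (hYlaw : ∀ n, 2 ≤ n →
      ℙ {ω | Y n ω = Nn n} = ENNReal.ofReal (1 / (2 * (Nn n) ^ 2)) ∧
      ℙ {ω | Y n ω = -Nn n} = ENNReal.ofReal (1 / (2 * (Nn n) ^ 2)) ∧
      ℙ {ω | Y n ω = 0} = ENNReal.ofReal (1 - 1 / (Nn n) ^ 2))
    (hNM : ∀ n : ℕ, 2 ≤ n → ((n : ℝ) - 1) * M < Nn n) :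
    (∀ ε : ℝ, 0 < ε →
      Tendsto (fun n => ∑ i ∈ Finset.Icc 1 n,
          ∫ ω in {ω | ε < |exRow X Y n i ω|}, (exRow X Y n i ω) ^ 2)
        atTop (nhds 0))
    ∧ (∀ n, 2 ≤ n →
        {ω | n < fpt n (psum (exRow X Y n)) (fun _ => 0) ω} =ᵐ[ℙ]
          {ω | Y n ω = Nn n})
    ∧ (∀ n, 2 ≤ n →
        (∫ ω in {ω | n < fpt n (psum (exRow X Y n)) (fun _ => 0) ω},
            psum (exRow X Y n) n ω)
          = (ℙ {ω | Y n ω = Nn n}).toReal * Nn n / Real.sqrt n)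
    ∧ (fun n => (ℙ {ω | n < fpt n (psum (exRow X Y n)) (fun _ => 0) ω}).toReal)
        =o[atTop] (fun n =>
          ∫ ω in {ω | n < fpt n (psum (exRow X Y n)) (fun _ => 0) ω},
            psum (exRow X Y n) n ω) := by
  classical
  have hNpos : ∀ n, 0 < Nn n := fun n => lt_of_lt_of_le one_pos (hN n)
  -- M ≥ 1
  have hM1 : 1 ≤ M := by
    have h2 := hbdd 2 le_rfl
    have hM0 : 0 ≤ M := by
      obtain ⟨ω, hω⟩ := h2.exists
      exact le_trans (abs_nonneg _) hω
    have hint2 : Integrable (fun ω => (X 2 ω)^2) ℙ := by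
      refine ⟨((hmeas 2).pow_const 2).aestronglyMeasurable,
        HasFiniteIntegral.of_bounded (C := M^2) ?_⟩
      filter_upwards [h2] with ω hω
      have := abs_nonneg (X 2 ω)
      simp only [Real.norm_eq_abs, abs_pow, abs_abs]
      nlinarith
    have hle : (1:ℝ) ≤ M^2 := by
      have := integral_mono_ae hint2 (integrable_const (M^2)) ?_
      · rwa [hvar 2 le_rfl, integral_const, probReal_univ, one_smul] at this
      · filter_upwards [h2] with ω hω
        have := abs_nonneg (X 2 ω)
        simp only [← sq_abs (X 2 ω)]
        nlinarith
    nlinarith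
  have hM0 : 0 ≤ M := le_trans zero_le_one hM1
  -- trichotomy for Y n
  have htri : ∀ n, 2 ≤ n → ∀ᵐ ω ∂ℙ, Y n ω = Nn n ∨ Y n ω = -Nn n ∨ Y n ω = 0 := by
    intro n hn
    have hNposn : (0:ℝ) < Nn n := hNpos n
    obtain ⟨hA, hB, hC⟩ := hYlaw n hn
    set A := {ω | Y n ω = Nn n}
    set B := {ω | Y n ω = -Nn n}
    set C := {ω | Y n ω = 0}
    have hmA : MeasurableSet A := hmeasY n (measurableSet_singleton (Nn n))
    have hmB : MeasurableSet B := hmeasY n (measurableSet_singleton (-Nn n))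
    have hmC : MeasurableSet C := hmeasY n (measurableSet_singleton 0)
    have hdBC : Disjoint B C := by
      rw [Set.disjoint_left]; intro ω h1 h2
      simp only [B, C, Set.mem_setOf_eq] at h1 h2
      rw [h2] at h1; linarith
    have hdABC : Disjoint A (B ∪ C) := by
      rw [Set.disjoint_left]; rintro ω h1 (h2 | h2) <;>
        simp only [A, B, C, Set.mem_setOf_eq] at h1 h2 <;> rw [h2] at h1 <;> linarith
    have hunion : ℙ (A ∪ (B ∪ C)) = 1 := by
      rw [measure_union hdABC (hmB.union hmC), measure_union hdBC hmC, hA, hB, hC]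
      have h1 : (0:ℝ) ≤ 1 / (2 * Nn n ^ 2) := by positivity
      have h2 : (0:ℝ) ≤ 1 - 1 / Nn n ^ 2 := by
        have : 1 / Nn n ^ 2 ≤ 1 := by
          rw [div_le_one (by positivity)]; nlinarith [hN n]
        linarith
      rw [← ENNReal.ofReal_add h1 h2, ← ENNReal.ofReal_add h1 (by positivity)]
      rw [show 1 / (2 * Nn n ^ 2) + (1 / (2 * Nn n ^ 2) + (1 - 1 / Nn n ^ 2)) = 1 by
        field_simp; ring]
      exact ENNReal.ofReal_one
    have hcompl : ℙ (A ∪ (B ∪ C))ᶜ = 0 := by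
      rw [measure_compl (hmA.union (hmB.union hmC)) (measure_ne_top _ _), hunion, measure_univ,
        tsub_self]
    rw [ae_iff]
    have hset : {ω | ¬(Y n ω = Nn n ∨ Y n ω = -Nn n ∨ Y n ω = 0)} = (A ∪ (B ∪ C))ᶜ := by
      ext ω
      simp only [A, B, C, Set.mem_compl_iff, Set.mem_union, Set.mem_setOf_eq]
    rw [hset]; exact hcompl
  -- Y bounded a.e.
  have hYbdd : ∀ n, 2 ≤ n → ∀ᵐ ω ∂ℙ, |Y n ω| ≤ Nn n := by
    intro n hn
    filter_upwards [htri n hn] with ω hω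
    rcases hω with h | h | h <;> rw [h]
    · rw [abs_of_nonneg (hNpos n).le]
    · rw [abs_neg, abs_of_nonneg (hNpos n).le]
    · rw [abs_zero]; exact (hNpos n).le
  -- integrability
  have hXint : ∀ k, 2 ≤ k → Integrable (X k) ℙ := fun k hk =>
    ⟨(hmeas k).aestronglyMeasurable, HasFiniteIntegral.of_bounded (hbdd k hk)⟩
  have hYint : ∀ n, 2 ≤ n → Integrable (Y n) ℙ := fun n hn =>
    ⟨(hmeasY n).aestronglyMeasurable, HasFiniteIntegral.of_bounded (hYbdd n hn)⟩
  -- partial sum formula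
  have hpsum : ∀ n k : ℕ, 1 ≤ k → ∀ ω : Ω, psum (exRow X Y n) k ω
      = (Y n ω + ∑ i ∈ Finset.Icc 2 k, X i ω) / Real.sqrt n := by
    intro n k hk ω
    unfold psum
    have h1 : Finset.Icc 1 k = insert 1 (Finset.Icc 2 k) :=
      (Finset.insert_Icc_add_one_left_eq_Icc hk).symm
    rw [h1, Finset.sum_insert (by simp)]
    have h2 : ∀ i ∈ Finset.Icc 2 k, exRow X Y n i ω = X i ω / Real.sqrt n := by
      intro i hi
      simp only [Finset.mem_Icc] at hi
      unfold exRow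
      rw [if_neg (by omega)]
    rw [Finset.sum_congr rfl h2]
    unfold exRow
    rw [if_pos rfl, add_div, Finset.sum_div]
  -- fpt characterization
  have hfpt : ∀ n : ℕ, ∀ ω : Ω,
      (n < fpt n (psum (exRow X Y n)) (fun _ => 0) ω ↔
        ∀ k, 1 ≤ k → k ≤ n → 0 < psum (exRow X Y n) k ω) := by
    intro n ω
    constructor
    · intro h k h1 h2
      by_contra hc
      have hk : k ∈ ({k | 1 ≤ k ∧ k ≤ n ∧
          psum (exRow X Y n) k ω ≤ (fun _ : ℕ => (0:ℝ)) k} ∪ {n + 1}) :=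
        Or.inl ⟨h1, h2, not_lt.1 hc⟩
      have := Nat.sInf_le hk
      unfold fpt at h; omega
    · intro hpos
      have hset : ({k | 1 ≤ k ∧ k ≤ n ∧
          psum (exRow X Y n) k ω ≤ (fun _ : ℕ => (0:ℝ)) k} ∪ {n + 1}) = {n+1} := by
        ext k; simp only [Set.mem_union, Set.mem_setOf_eq, Set.mem_singleton_iff]
        constructor
        · rintro (⟨h1, h2, h3⟩ | h)
          · exact absurd h3 (not_le.2 (hpos k h1 h2))
          · exact h
        · exact Or.inr
      unfold fpt; rw [hset, csInf_singleton]; omega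
  -- statement 2: event equality
  have hev : ∀ n, 2 ≤ n →
      {ω | n < fpt n (psum (exRow X Y n)) (fun _ => 0) ω} =ᵐ[ℙ]
        {ω | Y n ω = Nn n} := by
    intro n hn
    have hnR : (0:ℝ) < n := by positivity
    have hsq : 0 < Real.sqrt n := Real.sqrt_pos.2 hnR
    rw [Filter.eventuallyEq_set]
    have hXa : ∀ᵐ ω ∂ℙ, ∀ k ∈ Finset.Icc 2 n, |X k ω| ≤ M :=
      (Filter.eventually_all_finset _).2 (fun k hk => hbdd k (Finset.mem_Icc.1 hk).1)
    filter_upwards [htri n hn, hXa] with ω hY hX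
    rw [hfpt n ω]
    constructor
    · intro h
      have h1 := h 1 le_rfl (le_trans one_le_two hn)
      rw [hpsum n 1 le_rfl ω] at h1
      rw [show Finset.Icc 2 1 = ∅ from rfl, Finset.sum_empty, add_zero] at h1
      have hYpos : 0 < Y n ω := by
        rcases div_pos_iff.1 h1 with ⟨h, _⟩ | ⟨_, h⟩
        · exact h
        · linarith
      rcases hY with h | h | h
      · exact h
      · rw [h] at hYpos; linarith [hNpos n]
      · rw [h] at hYpos; linarith
    · intro hYN k h1 h2
      rw [hpsum n k h1 ω, hYN]
      apply div_pos _ hsq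
      have hcard : (Finset.Icc 2 k).card = k - 1 := by
        rw [Nat.card_Icc]; omega
      have hsum : |∑ i ∈ Finset.Icc 2 k, X i ω| ≤ ((k:ℝ) - 1) * M := by
        calc |∑ i ∈ Finset.Icc 2 k, X i ω| ≤ ∑ i ∈ Finset.Icc 2 k, |X i ω| :=
              Finset.abs_sum_le_sum_abs _ _
        _ ≤ (Finset.Icc 2 k).card • M := Finset.sum_le_card_nsmul _ _ _
              (fun i hi => hX i (Finset.mem_Icc.mp hi |> fun ⟨a, b⟩ =>
                Finset.mem_Icc.mpr ⟨a, le_trans b h2⟩))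
        _ = ((k:ℝ) - 1) * M := by
              rw [nsmul_eq_mul, hcard]
              congr 1
              have : (1:ℕ) ≤ k := h1
              push_cast [Nat.cast_sub this]
              ring
      have hkn : ((k:ℝ) - 1) * M ≤ ((n:ℝ) - 1) * M := by
        have : (k:ℝ) ≤ n := by exact_mod_cast h2
        nlinarith
      have hNMn := hNM n hn
      have habs := abs_le.1 hsum
      linarith [habs.1]
  -- zero set-integral of X k over {Y n = Nn n}
  have hXzero : ∀ k n : ℕ, 2 ≤ k → 2 ≤ n →
      ∫ ω in {ω | Y n ω = Nn n}, X k ω = 0 := by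
    intro k n hk hn
    have hindXY : IndepFun (X k) (Y n) ℙ := by
      have := hind.indepFun (show (Sum.inl k : ℕ ⊕ ℕ) ≠ Sum.inr n by simp)
      simpa using this
    set φ : ℝ → ℝ := Set.indicator {Nn n} (fun _ => 1) with hφdef
    have hφ : Measurable φ := measurable_const.indicator (measurableSet_singleton _)
    have hindg : IndepFun (X k) (φ ∘ Y n) ℙ := by
      have := hindXY.comp measurable_id hφ
      simpa using this
    have hgint : Integrable (φ ∘ Y n) ℙ := by
      refine ⟨(hφ.comp (hmeasY n)).aestronglyMeasurable,
        HasFiniteIntegral.of_bounded (C := 1) ?_⟩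
      filter_upwards with ω
      by_cases hω : Y n ω = Nn n <;>
        simp [φ, Set.indicator, hω]
    have hmul := hindg.integral_mul_eq_mul_integral (hXint k hk).aestronglyMeasurable hgint.aestronglyMeasurable
    have hA : MeasurableSet {ω | Y n ω = Nn n} := hmeasY n (measurableSet_singleton _)
    rw [← integral_indicator hA]
    have heq : Set.indicator {ω | Y n ω = Nn n} (X k) = fun ω => X k ω * (φ ∘ Y n) ω := by
      ext ω
      by_cases hω : Y n ω = Nn n <;> simp [Set.indicator, φ, hω]
    rw [heq]
    have hmm : (fun ω => X k ω * (φ ∘ Y n) ω) = X k * (φ ∘ Y n) := rfl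
    rw [hmm, hmul, hmean k hk, zero_mul]
  -- statement 3
  have hEn : ∀ n, 2 ≤ n →
      (∫ ω in {ω | n < fpt n (psum (exRow X Y n)) (fun _ => 0) ω},
          psum (exRow X Y n) n ω)
        = (ℙ {ω | Y n ω = Nn n}).toReal * Nn n / Real.sqrt n := by
    intro n hn
    have hA : MeasurableSet {ω | Y n ω = Nn n} := hmeasY n (measurableSet_singleton _)
    rw [setIntegral_congr_set (hev n hn)]
    rw [integral_congr_ae (Filter.Eventually.of_forall
      (fun ω => hpsum n n (le_trans one_le_two hn) ω))]
    simp only [div_eq_mul_inv]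
    rw [integral_mul_const]
    congr 1
    rw [integral_add ((hYint n hn).integrableOn)
      (Integrable.integrableOn (integrable_finset_sum _ (fun i hi =>
        hXint i (Finset.mem_Icc.1 hi).1)))]
    rw [integral_finset_sum _ (fun i hi => (hXint i (Finset.mem_Icc.1 hi).1).integrableOn)]
    rw [Finset.sum_congr rfl (fun i hi => hXzero i n (Finset.mem_Icc.1 hi).1 hn),
      Finset.sum_const, smul_zero, add_zero,
      setIntegral_congr_fun hA (fun ω hω => hω), setIntegral_const, smul_eq_mul]
    rfl
  refine ⟨?_, hev, hEn, ?_⟩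
  · -- Lindeberg condition
    intro ε hε
    have hmeasRow : ∀ n i, Measurable (exRow X Y n i) := by
      intro n i
      unfold exRow
      split_ifs
      · exact (hmeasY n).div_const _
      · exact (hmeas i).div_const _
    have hnonneg : ∀ n : ℕ, 0 ≤ ∑ i ∈ Finset.Icc 1 n,
        ∫ ω in {ω | ε < |exRow X Y n i ω|}, (exRow X Y n i ω) ^ 2 := by
      intro n
      refine Finset.sum_nonneg fun i _ => setIntegral_nonneg ?_ fun ω _ => by positivity
      exact measurableSet_lt measurable_const (hmeasRow n i).abs
    have hbound : ∀ᶠ n : ℕ in atTop, (∑ i ∈ Finset.Icc 1 n,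
        ∫ ω in {ω | ε < |exRow X Y n i ω|}, (exRow X Y n i ω) ^ 2) ≤ 1 / (n : ℝ) := by
      filter_upwards [eventually_ge_atTop (max 2 (⌈(M / ε) ^ 2⌉₊ + 1))] with n hn
      have hn2 : 2 ≤ n := le_trans (le_max_left _ _) hn
      have hnR : (0:ℝ) < n := by positivity
      have hsq : (0:ℝ) < Real.sqrt n := Real.sqrt_pos.2 hnR
      have hMε : M ≤ ε * Real.sqrt n := by
        have h1 : ((M / ε) ^ 2 : ℝ) ≤ n := by
          calc ((M / ε) ^ 2 : ℝ) ≤ (⌈(M / ε) ^ 2⌉₊ : ℝ) := Nat.le_ceil _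
          _ ≤ (n : ℝ) := by
              have : (⌈(M / ε) ^ 2⌉₊ : ℕ) ≤ n := le_trans (by omega) hn
              exact_mod_cast this
        have h2 : M / ε ≤ Real.sqrt n := by
          rw [show (n:ℝ) = Real.sqrt n * Real.sqrt n from (Real.mul_self_sqrt hnR.le).symm] at h1
          nlinarith [div_nonneg hM0 hε.le, hsq]
        calc M = ε * (M / ε) := by field_simp
        _ ≤ ε * Real.sqrt n := by nlinarith
      rw [← Finset.insert_Icc_add_one_left_eq_Icc (by omega : 1 ≤ n), Finset.sum_insert (by simp), one_add_one_eq_two]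
      have hzero : ∀ i ∈ Finset.Icc 2 n,
          (∫ ω in {ω | ε < |exRow X Y n i ω|}, (exRow X Y n i ω) ^ 2) = 0 := by
        intro i hi
        have hi2 : 2 ≤ i := (Finset.mem_Icc.1 hi).1
        have hnull : ℙ {ω | ε < |exRow X Y n i ω|} = 0 := by
          have hsub : {ω | ε < |exRow X Y n i ω|} ⊆ {ω | ¬ |X i ω| ≤ M} := by
            intro ω hω
            simp only [Set.mem_setOf_eq, not_le] at hω ⊢
            unfold exRow at hω
            rw [if_neg (by omega)] at hω
            rw [abs_div, abs_of_nonneg hsq.le] at hω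
            have : ε * Real.sqrt n < |X i ω| := by
              rw [lt_div_iff₀ hsq] at hω; linarith
            linarith
          exact measure_mono_null hsub (ae_iff.1 (hbdd i hi2))
        rw [Measure.restrict_eq_zero.2 hnull, integral_zero_measure]
      rw [Finset.sum_congr rfl hzero, Finset.sum_const, smul_zero, add_zero]
      have hrow1 : exRow X Y n 1 = fun ω => Y n ω / Real.sqrt n := by
        funext ω; unfold exRow; rw [if_pos rfl]
      rw [hrow1]
      have hint : Integrable (fun ω => (Y n ω / Real.sqrt n) ^ 2) ℙ := by
        refine ⟨(((hmeasY n).div_const _).pow_const 2).aestronglyMeasurable,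
          HasFiniteIntegral.of_bounded (C := (Nn n / Real.sqrt n) ^ 2) ?_⟩
        filter_upwards [hYbdd n hn2] with ω hω
        rw [Real.norm_eq_abs, abs_pow, abs_div, abs_of_nonneg hsq.le]
        have hle : |Y n ω| / Real.sqrt n ≤ Nn n / Real.sqrt n := by gcongr
        exact pow_le_pow_left₀ (by positivity) hle 2
      calc (∫ ω in {ω | ε < |(fun ω => Y n ω / Real.sqrt n) ω|},
            ((fun ω => Y n ω / Real.sqrt n) ω) ^ 2)
          ≤ ∫ ω, (Y n ω / Real.sqrt n) ^ 2 :=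
            setIntegral_le_integral hint (Filter.Eventually.of_forall fun ω => by positivity)
        _ = 1 / (n : ℝ) := by
            simp only [div_pow, Real.sq_sqrt hnR.le]
            rw [integral_div, hvarY n hn2]
    exact squeeze_zero' (Filter.Eventually.of_forall hnonneg) hbound
      tendsto_one_div_atTop_nhds_zero_nat
  · -- littleo
    rw [Asymptotics.isLittleO_iff]
    intro c hc
    filter_upwards [eventually_ge_atTop
      (max 2 (max (⌈(2 / c) ^ 2⌉₊ + 1) (⌈c ^ 2⌉₊ + 1)))] with n hn
    have hn2 : 2 ≤ n := le_trans (le_max_left _ _) hn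
    have hnR : (0:ℝ) < n := by positivity
    have hsq : (0:ℝ) < Real.sqrt n := Real.sqrt_pos.2 hnR
    have hNn := hNpos n
    -- √n ≤ c * Nn n
    have hge1 : ((2 / c) ^ 2 : ℝ) ≤ n := by
      have h : (⌈(2 / c) ^ 2⌉₊ : ℕ) ≤ n :=
        le_trans (by omega) (le_trans (le_max_right _ _) hn)
      calc ((2 / c) ^ 2 : ℝ) ≤ (⌈(2 / c) ^ 2⌉₊ : ℝ) := Nat.le_ceil _
      _ ≤ (n : ℝ) := by exact_mod_cast h
    have hge2 : (c ^ 2 : ℝ) ≤ n := by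
      have h : (⌈c ^ 2⌉₊ : ℕ) ≤ n := by
        have := le_trans (le_max_right _ _) hn
        have := le_trans (le_max_right _ _) (le_trans (le_max_right _ _) hn)
        omega
      calc (c ^ 2 : ℝ) ≤ (⌈c ^ 2⌉₊ : ℝ) := Nat.le_ceil _
      _ ≤ (n : ℝ) := by exact_mod_cast h
    have hs1 : 2 / c ≤ Real.sqrt n := by
      have := Real.sqrt_le_sqrt hge1
      rwa [Real.sqrt_sq (by positivity)] at this
    have hs2 : c ≤ Real.sqrt n := by
      have := Real.sqrt_le_sqrt hge2
      rwa [Real.sqrt_sq hc.le] at this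
    have hss : Real.sqrt n * Real.sqrt n = n := Real.mul_self_sqrt hnR.le
    have h3 : 2 ≤ c * Real.sqrt n := by
      have : c * (2 / c) = 2 := by field_simp
      nlinarith
    have hkey1 : Real.sqrt n ≤ c * ((n:ℝ) - 1) := by
      nlinarith [mul_le_mul_of_nonneg_right h3 hsq.le]
    have hkey : Real.sqrt n ≤ c * Nn n := by
      have hNMn := hNM n hn2
      have hn1 : (1:ℝ) ≤ (n:ℝ) - 1 := by
        have : (2:ℝ) ≤ n := by exact_mod_cast hn2
        linarith
      nlinarith
    -- rewrite both sides
    have hPA : (ℙ {ω | Y n ω = Nn n}).toReal = 1 / (2 * Nn n ^ 2) := by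
      rw [(hYlaw n hn2).1, ENNReal.toReal_ofReal (by positivity)]
    have hf : (ℙ {ω | n < fpt n (psum (exRow X Y n)) (fun _ => 0) ω}).toReal
        = 1 / (2 * Nn n ^ 2) := by
      rw [measure_congr (hev n hn2), hPA]
    have hg : (∫ ω in {ω | n < fpt n (psum (exRow X Y n)) (fun _ => 0) ω},
          psum (exRow X Y n) n ω) = 1 / (2 * Nn n ^ 2) * Nn n / Real.sqrt n := by
      rw [hEn n hn2, hPA]
    rw [hf, hg, Real.norm_eq_abs, Real.norm_eq_abs,
      abs_of_nonneg (by positivity), abs_of_nonneg (by positivity)]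
    have hre : c * (1 / (2 * Nn n ^ 2) * Nn n / Real.sqrt n)
        = (c * Nn n / Real.sqrt n) * (1 / (2 * Nn n ^ 2)) := by
      field_simp
    rw [hre]
    have h2 : 1 ≤ c * Nn n / Real.sqrt n := (one_le_div hsq).2 hkey
    exact le_mul_of_one_le_left (by positivity) h2
end
end

section
/- Fix n and let X_1,...,X_n be independent with E[X_i] = 0 and finite variances, let g_1,...,g_n be reals with g_n* = max_k|g_k|, S_k = X_1+...+X_k, Z_k := S_k − g_k, T := inf{k ≥ 1 : S_k ≤ g_k}, Ẑ_k := Z_k·1{T > k}. Let α be a stopping time (with respect to the natural filtration of the X_i) with 1 ≤ α ≤ l ≤ n almost surely, and set p(α,l) := P(α < T, α < l). Then E[Ẑ_α] − E[Ẑ_l] ≤ 2 g_n* p(α,l). -/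
open MeasureTheory ProbabilityTheory Filter

noncomputable section

/-- `Ẑ_k = (S_k - g_k) 1{T > k}`. -/
def zhat {Ω : Type*} (n : ℕ) (X : ℕ → Ω → ℝ) (g : ℕ → ℝ) (k : ℕ) (ω : Ω) : ℝ :=
  if k < fpt n (psum X) g ω then psum X k ω - g k else 0

section Aux

variable {Ω : Type*} {n : ℕ} {S : ℕ → Ω → ℝ} {g : ℕ → ℝ} {ω : Ω}

lemma fpt_mem (n : ℕ) (S : ℕ → Ω → ℝ) (g : ℕ → ℝ) (ω : Ω) :
    fpt n S g ω ∈ ({k | 1 ≤ k ∧ k ≤ n ∧ S k ω ≤ g k} ∪ {n + 1} : Set ℕ) :=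
  Nat.sInf_mem ⟨n + 1, Or.inr rfl⟩

lemma fpt_one_le (n : ℕ) (S : ℕ → Ω → ℝ) (g : ℕ → ℝ) (ω : Ω) : 1 ≤ fpt n S g ω := by
  rcases fpt_mem n S g ω with h | h
  · exact h.1
  · simp only [Set.mem_singleton_iff] at h; omega

lemma fpt_le (n : ℕ) (S : ℕ → Ω → ℝ) (g : ℕ → ℝ) (ω : Ω) : fpt n S g ω ≤ n + 1 :=
  Nat.sInf_le (Or.inr rfl)

lemma lt_fpt_iff {k : ℕ} (hk : k ≤ n) :
    k < fpt n S g ω ↔ ∀ j, 1 ≤ j → j ≤ k → g j < S j ω := by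
  constructor
  · intro h j hj1 hjk
    by_contra hle
    push_neg at hle
    have : fpt n S g ω ≤ j := Nat.sInf_le (Or.inl ⟨hj1, le_trans hjk hk, hle⟩)
    omega
  · intro h
    by_contra hle
    push_neg at hle
    rcases fpt_mem n S g ω with hmem | hmem
    · exact absurd hmem.2.2 (not_le.mpr (h _ hmem.1 hle))
    · simp only [Set.mem_singleton_iff] at hmem; omega

lemma fpt_spec (h : fpt n S g ω ≤ n) : S (fpt n S g ω) ω ≤ g (fpt n S g ω) := by
  rcases fpt_mem n S g ω with hmem | hmem
  · exact hmem.2.2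
  · simp only [Set.mem_singleton_iff] at hmem; omega

end Aux

/-- Lemma 3, upper bound: for independent centered square-integrable
random variables (`X 0 = 0` by convention), a boundary `g`, and a stopping time `α` of
the natural filtration with `1 ≤ α ≤ l ≤ n` a.s.,
`E[Ẑ_α] - E[Ẑ_l] ≤ 2 g* · P(α < T, α < l)`. -/
theorem stmt_13 {Ω : Type*} [MeasureSpace Ω] [IsProbabilityMeasure (ℙ : Measure Ω)]
    (n l : ℕ) (X : ℕ → Ω → ℝ) (g : ℕ → ℝ) (α : Ω → ℕ)
    (hsm : ∀ i, StronglyMeasurable (X i))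
    (hX0 : ∀ ω, X 0 ω = 0)
    (hind : iIndepFun
      (fun i : {i // i ∈ Finset.Icc 1 n} => X i) ℙ)
    (hmean : ∀ i ∈ Finset.Icc 1 n, ∫ ω, X i ω = 0)
    (hL2 : ∀ i ∈ Finset.Icc 1 n, MemLp (X i) 2 ℙ)
    (hl : l ≤ n)
    (hα : IsStoppingTime (MeasureTheory.Filtration.natural X hsm) (fun ω => (α ω : WithTop ℕ)))
    (hαl : ∀ᵐ ω ∂ℙ, 1 ≤ α ω ∧ α ω ≤ l) :
    (∫ ω, zhat n X g (α ω) ω) - ∫ ω, zhat n X g l ω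
      ≤ 2 * (⨆ k ∈ Finset.Icc 1 n, |g k|)
          * (ℙ {ω | α ω < fpt n (psum X) g ω ∧ α ω < l}).toReal := by
  classical
  have hne : (MeasureTheory.ae (ℙ : Measure Ω)).NeBot :=
    ae_neBot.mpr (IsProbabilityMeasure.ne_zero ℙ)
  obtain ⟨ω₀, hω₀⟩ := hαl.exists
  have hl1 : 1 ≤ l := le_trans hω₀.1 hω₀.2
  set G := ⨆ k ∈ Finset.Icc 1 n, |g k| with hGdef
  set F := MeasureTheory.Filtration.natural X hsm with hFdef
  set T := fpt n (psum X) g with hTdef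
  set A := {ω | α ω < T ω ∧ α ω < l} with hAdef
  -- bound on G
  have hGb : ∀ k ∈ Finset.Icc 1 n, |g k| ≤ G := by
    intro k hk
    have hbdd : BddAbove (Set.range fun k => ⨆ _ : k ∈ Finset.Icc 1 n, |g k|) := by
      refine ⟨∑ j ∈ Finset.Icc 1 n, |g j|, ?_⟩
      rintro x ⟨j, rfl⟩
      dsimp only
      by_cases hj : j ∈ Finset.Icc 1 n
      · rw [ciSup_pos hj]
        exact Finset.single_le_sum (fun i _ => abs_nonneg (g i)) hj
      · haveI : IsEmpty (j ∈ Finset.Icc 1 n) := ⟨hj⟩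
        rw [Real.iSup_of_isEmpty]
        exact Finset.sum_nonneg fun i _ => abs_nonneg (g i)
    have h2 := le_ciSup hbdd k
    rwa [ciSup_pos hk] at h2
  have hG0 : 0 ≤ G :=
    le_trans (abs_nonneg (g 1)) (hGb 1 (by simp only [Finset.mem_Icc]; omega))
  -- measurability basics
  have hFle : ∀ k, F k ≤ (inferInstance : MeasurableSpace Ω) := F.le
  have hcomap_le : ∀ i k, i ≤ k →
      MeasurableSpace.comap (X i) (inferInstance : MeasurableSpace ℝ) ≤ F k := by
    intro i k hik
    exact le_biSup (fun j => MeasurableSpace.comap (X j) inferInstance) hik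
  have hXFm : ∀ i k, i ≤ k → Measurable[F k] (X i) := by
    intro i k hik
    exact measurable_iff_comap_le.mpr (hcomap_le i k hik)
  have hSFm : ∀ j k, j ≤ k → Measurable[F k] (psum X j) := by
    intro j k hjk
    exact Finset.measurable_sum _ fun i hi =>
      hXFm i k (le_trans (Finset.mem_Icc.mp hi).2 hjk)
  have hFgt : ∀ k, k ≤ n → MeasurableSet[F k] {ω | k < T ω} := by
    intro k hk
    have : {ω | k < T ω} = ⋂ j ∈ Finset.Icc 1 k, {ω | g j < psum X j ω} := by
      ext ω
      simp only [Set.mem_setOf_eq, Set.mem_iInter, Finset.mem_Icc, hTdef]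
      rw [lt_fpt_iff hk]
      constructor
      · intro h j hj; exact h j hj.1 hj.2
      · intro h j h1 h2; exact h j ⟨h1, h2⟩
    rw [this]
    exact Finset.measurableSet_biInter _ fun j hj =>
      measurableSet_lt measurable_const (hSFm j k (Finset.mem_Icc.mp hj).2)
  have hFTeq : ∀ t, 1 ≤ t → t ≤ n → MeasurableSet[F t] {ω | T ω = t} := by
    intro t h1 h2
    have : {ω | T ω = t} = {ω | t - 1 < T ω} \ {ω | t < T ω} := by
      ext ω
      simp only [Set.mem_setOf_eq, Set.mem_diff]
      omega
    rw [this]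
    exact MeasurableSet.diff
      (F.mono (by omega : t - 1 ≤ t) _ (hFgt (t - 1) (by omega)))
      (hFgt t h2)
  have hαk : ∀ k, MeasurableSet[F k] {ω | α ω = k} := fun k => by simpa using hα.measurableSet_eq k
  have hαlt : ∀ k, MeasurableSet[F k] {ω | α ω < k} := fun k => by simpa using hα.measurableSet_lt k
  -- integrability basics
  have hXint : ∀ i ∈ Finset.Icc 1 n, Integrable (X i) :=
    fun i hi => (hL2 i hi).integrable one_le_two
  have hSint : ∀ k, k ≤ n → Integrable (psum X k) := by
    intro k hk
    exact integrable_finset_sum _ fun i hi =>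
      hXint i (Finset.mem_Icc.mpr ⟨(Finset.mem_Icc.mp hi).1, le_trans (Finset.mem_Icc.mp hi).2 hk⟩)
  -- sets
  set Ak : ℕ → Set Ω := fun k => A ∩ {ω | α ω = k} with hAkdef
  set B := A ∩ {ω | T ω ≤ l} with hBdef
  set Bt : ℕ → Set Ω := fun t => A ∩ {ω | T ω = t} with hBtdef
  have hAkF : ∀ k ∈ Finset.Ico 1 l, MeasurableSet[F k] (Ak k) := by
    intro k hk
    rw [Finset.mem_Ico] at hk
    have : Ak k = {ω | α ω = k} ∩ {ω | k < T ω} := by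
      ext ω
      simp only [hAkdef, hAdef, Set.mem_inter_iff, Set.mem_setOf_eq]
      constructor
      · rintro ⟨⟨h1, h2⟩, h3⟩; exact ⟨h3, h3 ▸ h1⟩
      · rintro ⟨h1, h2⟩; exact ⟨⟨h1 ▸ h2, by omega⟩, h1⟩
    rw [this]
    exact (hαk k).inter (hFgt k (by omega))
  have key : ∀ k, 1 ≤ k → k ≤ l → ∀ C : Set Ω, MeasurableSet[F k] C →
      ∫ ω in C, psum X l ω = ∫ ω in C, psum X k ω := by
    intro k hk1 hkl C hC
    rcases eq_or_lt_of_le hkl with rfl | hkl'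
    · rfl
    have hCamb : MeasurableSet C := hFle k _ hC
    have hzero : ∀ i ∈ Finset.Ioc k l, ∫ ω in C, X i ω = 0 := by
      intro i hi
      rw [Finset.mem_Ioc] at hi
      have hi1n : i ∈ Finset.Icc 1 n := Finset.mem_Icc.mpr ⟨by omega, le_trans hi.2 hl⟩
      set Sf : Finset {j // j ∈ Finset.Icc 1 n} :=
        Finset.univ.filter (fun j => (j : ℕ) ≤ k) with hSf
      set Tf : Finset {j // j ∈ Finset.Icc 1 n} := {⟨i, hi1n⟩} with hTf
      have hdisj : Disjoint Sf Tf := by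
        rw [Finset.disjoint_right]
        intro j hjT hjS
        rw [hTf, Finset.mem_singleton] at hjT
        rw [hSf, Finset.mem_filter] at hjS
        subst hjT
        simp only at hjS
        omega
      have hIF := hind.indepFun_finset Sf Tf hdisj (fun j => (hsm j).measurable)
      rw [IndepFun_iff_Indep] at hIF
      have h1 : F k ≤ MeasurableSpace.comap (fun a (j : Sf) => X (j : ℕ) a)
          MeasurableSpace.pi := by
        refine iSup₂_le fun j hjk => ?_
        rcases Nat.eq_zero_or_pos j with hj0 | hj1
        · subst hj0
          have hX0' : X 0 = fun _ : Ω => (0 : ℝ) := funext hX0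
          rw [hX0', MeasurableSpace.comap_const]
          exact bot_le
        · have hjmem : j ∈ Finset.Icc 1 n := Finset.mem_Icc.mpr ⟨hj1, by omega⟩
          have hjS : (⟨j, hjmem⟩ : {j // j ∈ Finset.Icc 1 n}) ∈ Sf := by
            rw [hSf, Finset.mem_filter]; exact ⟨Finset.mem_univ _, hjk⟩
          show MeasurableSpace.comap ((fun v : Sf → ℝ => v ⟨⟨j, hjmem⟩, hjS⟩) ∘
              (fun a (j' : Sf) => X (j' : ℕ) a)) (inferInstance : MeasurableSpace ℝ) ≤ _
          rw [← MeasurableSpace.comap_comp]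
          exact MeasurableSpace.comap_mono
            (measurable_iff_comap_le.mp (measurable_pi_apply _))
      have h2 : MeasurableSpace.comap (X i) (inferInstance : MeasurableSpace ℝ) ≤
          MeasurableSpace.comap (fun a (j : Tf) => X (j : ℕ) a) MeasurableSpace.pi := by
        have hiT : (⟨i, hi1n⟩ : {j // j ∈ Finset.Icc 1 n}) ∈ Tf := Finset.mem_singleton_self _
        show MeasurableSpace.comap ((fun v : Tf → ℝ => v ⟨⟨i, hi1n⟩, hiT⟩) ∘
            (fun a (j' : Tf) => X (j' : ℕ) a)) (inferInstance : MeasurableSpace ℝ) ≤ _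
        rw [← MeasurableSpace.comap_comp]
        exact MeasurableSpace.comap_mono
          (measurable_iff_comap_le.mp (measurable_pi_apply _))
      have hCm : Measurable[F k] (C.indicator fun _ => (1 : ℝ)) :=
        measurable_const.indicator hC
      have hIndep2 : IndepFun (C.indicator fun _ => (1 : ℝ)) (X i) ℙ := by
        rw [IndepFun_iff_Indep]
        exact indep_of_indep_of_le_right
          (indep_of_indep_of_le_left hIF (le_trans (measurable_iff_comap_le.mp hCm) h1)) h2
      have hmul := IndepFun.integral_mul_eq_mul_integral hIndep2
        ((integrable_const (1 : ℝ)).indicator hCamb).aestronglyMeasurable (hXint i hi1n).aestronglyMeasurable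
      rw [show ((C.indicator fun _ => (1 : ℝ)) * X i)
        = fun ω => C.indicator (fun _ => (1 : ℝ)) ω * X i ω from rfl] at hmul
      have hfun : ∀ ω, C.indicator (X i) ω = C.indicator (fun _ => (1 : ℝ)) ω * X i ω := by
        intro ω; by_cases hω : ω ∈ C <;> simp [Set.indicator_apply, hω]
      rw [← integral_indicator hCamb]
      simp only [hfun]
      rw [hmul, hmean i hi1n, mul_zero]
    have hsplit : ∀ ω, psum X l ω = psum X k ω + ∑ i ∈ Finset.Ioc k l, X i ω := by
      intro ω
      rw [psum, psum, show Finset.Icc 1 l = Finset.Ioc 0 l from Finset.Icc_add_one_left_eq_Ioc 0 l, show Finset.Icc 1 k = Finset.Ioc 0 k from Finset.Icc_add_one_left_eq_Ioc 0 k,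
        ← Finset.sum_Ioc_consecutive _ (Nat.zero_le k) hkl]
    have hXintIoc : ∀ i ∈ Finset.Ioc k l, Integrable (X i) := by
      intro i hi
      rw [Finset.mem_Ioc] at hi
      exact hXint i (Finset.mem_Icc.mpr ⟨by omega, le_trans hi.2 hl⟩)
    calc ∫ ω in C, psum X l ω
        = ∫ ω in C, (psum X k ω + ∑ i ∈ Finset.Ioc k l, X i ω) := by simp only [hsplit]
      _ = (∫ ω in C, psum X k ω) + ∫ ω in C, (∑ i ∈ Finset.Ioc k l, X i ω) :=
          integral_add ((hSint k (le_trans hkl hl)).integrableOn)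
            ((integrable_finset_sum _ hXintIoc).integrableOn)
      _ = (∫ ω in C, psum X k ω) + ∑ i ∈ Finset.Ioc k l, ∫ ω in C, X i ω := by
          rw [integral_finset_sum _ (fun i hi => (hXintIoc i hi).integrableOn)]
      _ = ∫ ω in C, psum X k ω := by
          rw [Finset.sum_congr rfl hzero, Finset.sum_const_zero, add_zero]
  have hBtF : ∀ t ∈ Finset.Icc 1 l, MeasurableSet[F t] (Bt t) := by
    intro t ht
    rw [Finset.mem_Icc] at ht
    have : Bt t = {ω | α ω < t} ∩ {ω | T ω = t} := by
      ext ω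
      simp only [hBtdef, hAdef, Set.mem_inter_iff, Set.mem_setOf_eq]
      constructor
      · rintro ⟨⟨h1, h2⟩, h3⟩; exact ⟨h3 ▸ h1, h3⟩
      · rintro ⟨h1, h2⟩; exact ⟨⟨h2 ▸ h1, by omega⟩, h2⟩
    rw [this]
    exact (hαlt t).inter (hFTeq t ht.1 (le_trans ht.2 hl))
  -- zhat basics
  have hzh : ∀ k ω, zhat n X g k ω = if k < T ω then psum X k ω - g k else 0 :=
    fun _ _ => rfl
  have hzhat_eq : ∀ k, zhat n X g k
      = Set.indicator {ω | k < T ω} (fun ω => psum X k ω - g k) := by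
    intro k; funext ω
    rw [hzh, Set.indicator_apply]
    rfl
  have hzint : ∀ k, k ≤ n → Integrable (zhat n X g k) := by
    intro k hk
    rw [hzhat_eq]
    exact ((hSint k hk).sub (integrable_const _)).indicator (hFle k _ (hFgt k hk))
  -- ambient measurability of the relevant sets
  have hAkamb : ∀ k ∈ Finset.Ico 1 l, MeasurableSet (Ak k) := fun k hk => hFle k _ (hAkF k hk)
  have hBtamb : ∀ t ∈ Finset.Icc 1 l, MeasurableSet (Bt t) := fun t ht => hFle t _ (hBtF t ht)
  have hAamb : MeasurableSet A := by
    have hArw : A = ⋃ k ∈ Finset.range l, ({ω | α ω = k} ∩ {ω | k < T ω}) := by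
      ext ω
      simp only [Set.mem_iUnion, Finset.mem_range, Set.mem_inter_iff, Set.mem_setOf_eq, hAdef]
      constructor
      · rintro ⟨h1, h2⟩; exact ⟨α ω, h2, rfl, h1⟩
      · rintro ⟨k, hk, h1, h2⟩; exact ⟨h1 ▸ h2, by omega⟩
    rw [hArw]
    exact Finset.measurableSet_biUnion _ fun k hk =>
      (hFle k _ (hαk k)).inter (hFle k _ (hFgt k (by
        rw [Finset.mem_range] at hk; omega)))
  have hTlamb : MeasurableSet {ω | T ω ≤ l} := by
    have hrw : {ω | T ω ≤ l} = ⋃ t ∈ Finset.Icc 1 l, {ω | T ω = t} := by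
      ext ω
      simp only [Set.mem_iUnion, Finset.mem_Icc, Set.mem_setOf_eq]
      constructor
      · intro h; exact ⟨T ω, ⟨fpt_one_le n (psum X) g ω, h⟩, rfl⟩
      · rintro ⟨t, ht, h⟩; omega
    rw [hrw]
    exact Finset.measurableSet_biUnion _ fun t ht =>
      hFle t _ (hFTeq t (Finset.mem_Icc.mp ht).1 (le_trans (Finset.mem_Icc.mp ht).2 hl))
  have hBamb : MeasurableSet B := hAamb.inter hTlamb
  have hBsub : B ⊆ A := Set.inter_subset_left
  have hABamb : MeasurableSet (A \ B) := hAamb.diff hBamb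
  -- integrability of the zhat processes
  have hSlint : Integrable (psum X l) := hSint l hl
  have hzl_int : Integrable (zhat n X g l) := hzint l hl
  have hsum_int : Integrable (fun ω =>
      ∑ k ∈ Finset.Icc 1 l, Set.indicator {ω' | α ω' = k} (zhat n X g k) ω) :=
    integrable_finset_sum _ fun k hk =>
      (hzint k (le_trans (Finset.mem_Icc.mp hk).2 hl)).indicator (hFle k _ (hαk k))
  have hzα_eq : (fun ω => zhat n X g (α ω) ω) =ᵐ[ℙ]
      (fun ω => ∑ k ∈ Finset.Icc 1 l, Set.indicator {ω' | α ω' = k} (zhat n X g k) ω) := by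
    filter_upwards [hαl] with ω hω
    rw [Finset.sum_eq_single_of_mem (α ω) (Finset.mem_Icc.mpr hω)]
    · rw [Set.indicator_of_mem (by exact rfl : ω ∈ {ω' | α ω' = α ω})]
    · intro b _ hb
      exact Set.indicator_of_notMem (fun hmem => hb (by exact hmem.symm)) _
  have hzα_int : Integrable (fun ω => zhat n X g (α ω) ω) := hsum_int.congr hzα_eq.symm
  -- the pointwise decomposition
  set D : Ω → ℝ := fun ω =>
    (∑ k ∈ Finset.Ico 1 l, (Ak k).indicator (fun ω' => psum X k ω' - g k) ω)
      - (A \ B).indicator (fun ω' => psum X l ω' - g l) ω with hDdef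
  have hD_int1 : ∀ k ∈ Finset.Ico 1 l,
      Integrable ((Ak k).indicator fun ω' => psum X k ω' - g k) := fun k hk =>
    ((hSint k (by
      have := Finset.mem_Ico.mp hk; omega)).sub (integrable_const _)).indicator (hAkamb k hk)
  have hD_int2 : Integrable ((A \ B).indicator fun ω' => psum X l ω' - g l) :=
    (hSlint.sub (integrable_const _)).indicator hABamb
  have hDint : Integrable D := (integrable_finset_sum _ hD_int1).sub hD_int2
  have hDeq : (fun ω => zhat n X g (α ω) ω - zhat n X g l ω) =ᵐ[ℙ] D := by
    filter_upwards [hαl] with ω hω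
    obtain ⟨hω1, hω2⟩ := hω
    by_cases hA : ω ∈ A
    · have ha1 : α ω < T ω := hA.1
      have ha2 : α ω < l := hA.2
      have hsum : (∑ k ∈ Finset.Ico 1 l, (Ak k).indicator (fun ω' => psum X k ω' - g k) ω)
          = psum X (α ω) ω - g (α ω) := by
        have hmem' : ω ∈ Ak (α ω) := ⟨hA, rfl⟩
        rw [Finset.sum_eq_single_of_mem (α ω) (Finset.mem_Ico.mpr ⟨hω1, ha2⟩)
            (fun b _ hb => Set.indicator_of_notMem (fun hmem => hb hmem.2.symm) _),
          Set.indicator_of_mem hmem']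
      show zhat n X g (α ω) ω - zhat n X g l ω
        = (∑ k ∈ Finset.Ico 1 l, (Ak k).indicator (fun ω' => psum X k ω' - g k) ω)
          - (A \ B).indicator (fun ω' => psum X l ω' - g l) ω
      by_cases hTle : T ω ≤ l
      · have hBmem : ω ∈ B := ⟨hA, hTle⟩
        rw [hzh, hzh, if_pos ha1, if_neg (by omega), hsum,
          Set.indicator_of_notMem (fun h => h.2 hBmem) _]
      · have hmem : ω ∈ A \ B := ⟨hA, fun hB => hTle hB.2⟩
        rw [hzh, hzh, if_pos ha1, if_pos (by omega), hsum, Set.indicator_of_mem hmem]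
    · have hsum : (∑ k ∈ Finset.Ico 1 l, (Ak k).indicator (fun ω' => psum X k ω' - g k) ω)
          = 0 :=
        Finset.sum_eq_zero fun k _ => Set.indicator_of_notMem (fun hmem => hA hmem.1) _
      show zhat n X g (α ω) ω - zhat n X g l ω
        = (∑ k ∈ Finset.Ico 1 l, (Ak k).indicator (fun ω' => psum X k ω' - g k) ω)
          - (A \ B).indicator (fun ω' => psum X l ω' - g l) ω
      rw [hsum, Set.indicator_of_notMem (fun h => hA h.1) _, sub_zero]
      by_cases hcase : α ω < l
      · have hTα : T ω ≤ α ω := by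
          by_contra hcon
          exact hA ⟨by omega, hcase⟩
        rw [hzh, hzh, if_neg (by omega), if_neg (by omega)]
        ring
      · have hαeq : α ω = l := by omega
        rw [hαeq]
        ring
  -- rewrite the goal
  rw [← integral_sub hzα_int hzl_int, integral_congr_ae hDeq]
  have hIntD : ∫ ω, D ω
      = (∑ k ∈ Finset.Ico 1 l, ∫ ω in Ak k, (psum X k ω - g k))
        - ∫ ω in A \ B, (psum X l ω - g l) := by
    rw [hDdef]
    rw [integral_sub (integrable_finset_sum _ hD_int1) hD_int2,
      integral_finset_sum _ hD_int1]
    congr 1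
    · exact Finset.sum_congr rfl fun k hk => integral_indicator (hAkamb k hk)
    · exact integral_indicator hABamb
  -- step A : replace S_k by S_l on each A_k
  have hstepA : ∀ k ∈ Finset.Ico 1 l, ∫ ω in Ak k, (psum X k ω - g k)
      = (∫ ω in Ak k, psum X l ω) - g k * (ℙ (Ak k)).toReal := by
    intro k hk
    obtain ⟨hk1, hk2⟩ := Finset.mem_Ico.mp hk
    rw [integral_sub ((hSint k (by omega)).integrableOn)
      (integrableOn_const (measure_ne_top _ _))]
    rw [key k hk1 (le_of_lt hk2) (Ak k) (hAkF k hk), setIntegral_const, smul_eq_mul,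
      mul_comm, measureReal_def]
  -- the Ak are pairwise disjoint and their union is a.e. A
  have hAkpair : Set.Pairwise ↑(Finset.Ico 1 l) (Function.onFun Disjoint Ak) := by
    intro a _ b _ hab
    exact Set.disjoint_left.mpr fun ω h1 h2 => hab (h1.2.symm.trans h2.2)
  have hUae : (⋃ k ∈ Finset.Ico 1 l, Ak k) =ᵐ[ℙ] A := by
    rw [Filter.eventuallyEq_set]
    filter_upwards [hαl] with ω hω
    simp only [Set.mem_iUnion, Finset.mem_Ico]
    constructor
    · rintro ⟨k, _, hmem, _⟩; exact hmem
    · intro hA; exact ⟨α ω, ⟨hω.1, hA.2⟩, hA, rfl⟩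
  have hUnionA : (∑ k ∈ Finset.Ico 1 l, ∫ ω in Ak k, psum X l ω) = ∫ ω in A, psum X l ω := by
    rw [← integral_biUnion_finset _ (fun k hk => hAkamb k hk) hAkpair
      (fun k _ => hSlint.integrableOn)]
    exact setIntegral_congr_set hUae
  have hsumP : (∑ k ∈ Finset.Ico 1 l, (ℙ (Ak k)).toReal) = (ℙ A).toReal := by
    rw [← ENNReal.toReal_sum (fun k _ => measure_ne_top _ _),
      ← measure_biUnion_finset hAkpair (fun k hk => hAkamb k hk), measure_congr hUae]
  -- split A into B and A \ B
  have hsplitA : ∫ ω in A, psum X l ω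
      = (∫ ω in B, psum X l ω) + ∫ ω in A \ B, psum X l ω := by
    have h := setIntegral_union (Set.disjoint_sdiff_right) hABamb
      (hSlint.integrableOn) (hSlint.integrableOn) (f := psum X l) (μ := ℙ) (s := B) (t := A \ B)
    rw [Set.union_diff_cancel hBsub] at h
    exact h
  -- step B : bound the integral over B
  have hBunion : B = ⋃ t ∈ Finset.Icc 1 l, Bt t := by
    ext ω
    simp only [Set.mem_iUnion, Finset.mem_Icc, hBdef, hBtdef, Set.mem_inter_iff,
      Set.mem_setOf_eq]
    constructor
    · rintro ⟨hA, hT⟩; exact ⟨T ω, ⟨fpt_one_le n (psum X) g ω, hT⟩, hA, rfl⟩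
    · rintro ⟨t, ht, hA, hT⟩; exact ⟨hA, by omega⟩
  have hBtpair : Set.Pairwise ↑(Finset.Icc 1 l) (Function.onFun Disjoint Bt) := by
    intro a _ b _ hab
    exact Set.disjoint_left.mpr fun ω h1 h2 => hab (h1.2.symm.trans h2.2)
  have hPB : (ℙ B).toReal = ∑ t ∈ Finset.Icc 1 l, (ℙ (Bt t)).toReal := by
    rw [hBunion, measure_biUnion_finset hBtpair (fun t ht => hBtamb t ht),
      ENNReal.toReal_sum (fun t _ => measure_ne_top _ _)]
  have hstepB : ∫ ω in B, psum X l ω ≤ G * (ℙ B).toReal := by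
    rw [hPB, hBunion, integral_biUnion_finset _ (fun t ht => hBtamb t ht) hBtpair
      (fun t _ => hSlint.integrableOn), Finset.mul_sum]
    refine Finset.sum_le_sum fun t ht => ?_
    obtain ⟨ht1, ht2⟩ := Finset.mem_Icc.mp ht
    rw [key t ht1 ht2 (Bt t) (hBtF t ht)]
    have hbd : ∀ ω ∈ Bt t, psum X t ω ≤ g t := by
      intro ω hω
      have hTt : T ω = t := hω.2
      have := fpt_spec (n := n) (S := psum X) (g := g) (ω := ω) (by
        show T ω ≤ n; omega)
      rw [← hTdef, hTt] at this
      exact this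
    calc ∫ ω in Bt t, psum X t ω ≤ ∫ _ω in Bt t, g t :=
          setIntegral_mono_on ((hSint t (by omega)).integrableOn)
            (integrableOn_const (measure_ne_top _ _)) (hBtamb t ht) hbd
      _ = (ℙ (Bt t)).toReal * g t := by rw [setIntegral_const, smul_eq_mul, measureReal_def]
      _ ≤ (ℙ (Bt t)).toReal * G := by
          refine mul_le_mul_of_nonneg_left ?_ ENNReal.toReal_nonneg
          exact le_trans (le_abs_self _)
            (hGb t (Finset.mem_Icc.mpr ⟨ht1, by omega⟩))
      _ = G * (ℙ (Bt t)).toReal := mul_comm _ _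
  -- probability bookkeeping
  have hPadd : (ℙ B).toReal + (ℙ (A \ B)).toReal = (ℙ A).toReal := by
    rw [← ENNReal.toReal_add (measure_ne_top _ _) (measure_ne_top _ _),
      ← measure_union (Set.disjoint_sdiff_right) hABamb, Set.union_diff_cancel hBsub]
  have hgl : g l * (ℙ (A \ B)).toReal ≤ G * (ℙ (A \ B)).toReal :=
    mul_le_mul_of_nonneg_right
      (le_trans (le_abs_self _) (hGb l (Finset.mem_Icc.mpr ⟨hl1, hl⟩)))
      ENNReal.toReal_nonneg
  have hsumg : -(∑ k ∈ Finset.Ico 1 l, g k * (ℙ (Ak k)).toReal) ≤ G * (ℙ A).toReal := by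
    rw [← hsumP, Finset.mul_sum, ← Finset.sum_neg_distrib]
    refine Finset.sum_le_sum fun k hk => ?_
    obtain ⟨hk1, hk2⟩ := Finset.mem_Ico.mp hk
    rw [neg_mul_eq_neg_mul]
    refine mul_le_mul_of_nonneg_right ?_ ENNReal.toReal_nonneg
    exact le_trans (neg_le_abs _) (hGb k (Finset.mem_Icc.mpr ⟨hk1, by omega⟩))
  -- assemble everything
  have hABle : (∫ ω in A \ B, psum X l ω) - ∫ ω in A \ B, (psum X l ω - g l)
      = g l * (ℙ (A \ B)).toReal := by
    rw [integral_sub (hSlint.integrableOn)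
      (integrableOn_const (measure_ne_top _ _)), setIntegral_const,
      smul_eq_mul, mul_comm, measureReal_def]
    ring
  have hfinal : ∫ ω, D ω = (∫ ω in B, psum X l ω)
      - (∑ k ∈ Finset.Ico 1 l, g k * (ℙ (Ak k)).toReal)
      + g l * (ℙ (A \ B)).toReal := by
    rw [hIntD, Finset.sum_congr rfl hstepA, Finset.sum_sub_distrib, hUnionA, hsplitA]
    linarith [hABle]
  rw [hfinal]
  have h2G : 2 * G * (ℙ A).toReal
      = G * (ℙ B).toReal + G * (ℙ A).toReal + G * (ℙ (A \ B)).toReal := by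
    have : G * (ℙ B).toReal + G * (ℙ (A \ B)).toReal = G * (ℙ A).toReal := by
      rw [← mul_add, hPadd]
    linarith
  rw [h2G]
  linarith [hstepB, hsumg, hgl]
end
end

section
/- Let U_m := X_2 + ... + X_m be a simple symmetric random walk (X_k i.i.d. with P(X_k = ±1) = 1/2) and let underline-U_m := min_{2≤i≤m} U_i. Then for all integers m, N ≥ 1: P(N + underline-U_m > 0) = P(−N < U_m ≤ N). -/
open MeasureTheory ProbabilityTheory Filter

noncomputable section

/-- The walk `U_m = X_2 + … + X_m`. -/
def rwU {Ω : Type*} (X : ℕ → Ω → ℝ) (m : ℕ) (ω : Ω) : ℝ :=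
  ∑ i ∈ Finset.Icc 2 m, X i ω

/-- The running minimum `min_{2 ≤ i ≤ m} U_i` (with the convention that the empty
minimum, for `m = 1`, equals `0`). -/
def rwUmin {Ω : Type*} (X : ℕ → Ω → ℝ) (m : ℕ) (ω : Ω) : ℝ :=
  sInf ((fun i => rwU X i ω) '' Set.Icc 2 m)

set_option linter.unusedSectionVars false

namespace Stmt18


def step (b : Bool) : ℤ := if b then 1 else -1

@[simp] lemma step_true : step true = 1 := rfl
@[simp] lemma step_false : step false = -1 := rfl

def wsum (l : List Bool) : ℤ := (l.map step).sum

@[simp] lemma wsum_nil : wsum ([]) = 0 := rfl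
@[simp] lemma wsum_cons (b : Bool) (l : List Bool) : wsum (b :: l) = step b + wsum l := by
  simp [wsum]

def good : ℤ → List Bool → Bool
  | _, [] => true
  | N, b :: l => (decide (-N < step b)) && good (N + step b) l

@[simp] lemma good_nil (N : ℤ) : good N ([]) = true := rfl
@[simp] lemma good_cons (N : ℤ) (b : Bool) (l : List Bool) :
    good N (b :: l) = ((decide (-N < step b)) && good (N + step b) l) := rfl

def paths : ℕ → Finset (List Bool)
  | 0 => {[]}
  | n+1 => ((paths n).image (List.cons true)) ∪ ((paths n).image (List.cons false))

lemma mem_paths {n : ℕ} {l : List Bool} : l ∈ paths n ↔ l.length = n := by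
  induction n generalizing l with
  | zero => simp [paths, List.length_eq_zero_iff]
  | succ n ih =>
    simp only [paths, Finset.mem_union, Finset.mem_image]
    constructor
    · rintro (⟨a, ha, rfl⟩ | ⟨a, ha, rfl⟩) <;> simp [ih.1 ha]
    · intro hl
      cases l with
      | nil => simp at hl
      | cons b t =>
        have : t ∈ paths n := ih.2 (by simpa using hl)
        cases b
        · exact Or.inr ⟨t, this, rfl⟩
        · exact Or.inl ⟨t, this, rfl⟩

lemma card_split (n : ℕ) (p : List Bool → Prop) [DecidablePred p] :
    ((paths (n+1)).filter p).card
      = ((paths n).filter (fun l => p (true :: l))).card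
        + ((paths n).filter (fun l => p (false :: l))).card := by
  have hinj : ∀ b : Bool, Function.Injective (List.cons b) := by
    intro b x y h; simpa using h
  have himg : ∀ b : Bool, ((paths n).image (List.cons b)).filter p
      = ((paths n).filter (fun l => p (b :: l))).image (List.cons b) := by
    intro b
    ext l
    simp only [Finset.mem_filter, Finset.mem_image]
    constructor
    · rintro ⟨⟨a, ha, rfl⟩, hp⟩; exact ⟨a, ⟨ha, hp⟩, rfl⟩
    · rintro ⟨a, ⟨ha, hp⟩, rfl⟩; exact ⟨⟨a, ha, rfl⟩, hp⟩
  have hdisj : Disjoint (((paths n).image (List.cons true)).filter p)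
      (((paths n).image (List.cons false)).filter p) := by
    rw [Finset.disjoint_left]
    rintro l hl hl'
    simp only [Finset.mem_filter, Finset.mem_image] at hl hl'
    obtain ⟨⟨a, _, rfl⟩, _⟩ := hl
    obtain ⟨⟨a', _, h⟩, _⟩ := hl'
    simp at h
  show ((((paths n).image (List.cons true)) ∪ ((paths n).image (List.cons false))).filter p).card = _
  rw [Finset.filter_union, Finset.card_union_of_disjoint hdisj, himg, himg,
    Finset.card_image_of_injective _ (hinj true), Finset.card_image_of_injective _ (hinj false)]

/-- number of length-n paths with all partial sums `> -N`. -/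
def cntA (n : ℕ) (N : ℤ) : ℕ := ((paths n).filter (fun l => good N l = true)).card

/-- number of length-n paths with sum `≤ x`. -/
def cntF (n : ℕ) (x : ℤ) : ℕ := ((paths n).filter (fun l => wsum l ≤ x)).card

/-- number of length-n paths with `a < sum ≤ b`. -/
def cntE (n : ℕ) (a b : ℤ) : ℕ := ((paths n).filter (fun l => a < wsum l ∧ wsum l ≤ b)).card

lemma cntE_add_cntF (n : ℕ) {a b : ℤ} (hab : a ≤ b) : cntE n a b + cntF n a = cntF n b := by
  classical
  have h := Finset.card_filter_add_card_filter_not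
    (s := (paths n).filter (fun l => wsum l ≤ b)) (p := fun l => a < wsum l)
  rw [Finset.filter_filter, Finset.filter_filter] at h
  have h1 : ((paths n).filter fun l => wsum l ≤ b ∧ a < wsum l)
      = (paths n).filter (fun l => a < wsum l ∧ wsum l ≤ b) := by
    apply Finset.filter_congr; intro l _; constructor <;> (intro h; exact ⟨h.2, h.1⟩)
  have h2 : ((paths n).filter fun l => wsum l ≤ b ∧ ¬ a < wsum l)
      = (paths n).filter (fun l => wsum l ≤ a) := by
    apply Finset.filter_congr; intro l _
    constructor
    · intro h; omega
    · intro h; omega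
  rw [h1, h2] at h
  exact h

lemma main_count (n : ℕ) : ∀ N : ℤ, 1 ≤ N → cntA n N = cntE n (-N) N := by
  induction n with
  | zero =>
    intro N hN
    have h0 : paths 0 = {([] : List Bool)} := rfl
    simp only [cntA, cntE, h0]
    rw [Finset.filter_singleton, Finset.filter_singleton]
    simp only [good_nil, wsum_nil]
    rw [if_pos trivial]
    simp [show (-N : ℤ) < 0 by omega, show (0:ℤ) ≤ N by omega, show (0:ℤ) < N by omega]
  | succ n ih =>
    intro N hN
    have hA : cntA (n+1) N
        = ((paths n).filter (fun l => good N (true :: l) = true)).card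
          + ((paths n).filter (fun l => good N (false :: l) = true)).card :=
      card_split n _
    have hN1 : (-N : ℤ) < 1 := by omega
    have hAt : ((paths n).filter (fun l => good N (true :: l) = true)).card = cntA n (N+1) := by
      unfold cntA
      congr 1
      apply Finset.filter_congr
      intro l _
      simp [hN1]
    have hE : cntE (n+1) (-N) N
        = ((paths n).filter (fun l => (-N : ℤ) < wsum (true :: l) ∧ wsum (true :: l) ≤ N)).card
          + ((paths n).filter (fun l => (-N : ℤ) < wsum (false :: l) ∧ wsum (false :: l) ≤ N)).card :=
      card_split n _
    have hEt : ((paths n).filter (fun l => (-N : ℤ) < wsum (true :: l) ∧ wsum (true :: l) ≤ N)).card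
        = cntE n (-N-1) (N-1) := by
      unfold cntE
      congr 1
      apply Finset.filter_congr
      intro l _
      simp only [wsum_cons, step_true, decide_eq_true_eq]
      constructor <;> intro h <;> omega
    have hEf : ((paths n).filter (fun l => (-N : ℤ) < wsum (false :: l) ∧ wsum (false :: l) ≤ N)).card
        = cntE n (-N+1) (N+1) := by
      unfold cntE
      congr 1
      apply Finset.filter_congr
      intro l _
      simp only [wsum_cons, step_false, decide_eq_true_eq]
      constructor <;> intro h <;> omega
    have ih1 : cntA n (N+1) = cntE n (-N-1) (N+1) := by
      rw [ih (N+1) (by omega)]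
      congr 1
      ring
    rcases eq_or_lt_of_le hN with hN1' | hN2
    · -- N = 1
      obtain rfl : N = 1 := hN1'.symm
      have hAf : ((paths n).filter (fun l => good 1 (false :: l) = true)).card = 0 := by
        rw [Finset.card_eq_zero, Finset.filter_eq_empty_iff]
        intro l _
        simp
      have f1 := cntE_add_cntF n (a := (-2:ℤ)) (b := (0:ℤ)) (by omega)
      have f2 := cntE_add_cntF n (a := (0:ℤ)) (b := (2:ℤ)) (by omega)
      have f3 := cntE_add_cntF n (a := (-2:ℤ)) (b := (2:ℤ)) (by omega)
      rw [hA, hAt, hAf, hE, hEt, hEf] at *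
      norm_num at ih1 hEt hEf ⊢
      omega
    · -- N ≥ 2
      have hAf : ((paths n).filter (fun l => good N (false :: l) = true)).card = cntA n (N-1) := by
        unfold cntA
        congr 1
        apply Finset.filter_congr
        intro l _
        have hx : (-N : ℤ) < -1 := by omega
        have hy : N + -1 = N - 1 := by ring
        simp [hx, hy]
      have ih2 : cntA n (N-1) = cntE n (-N+1) (N-1) := by
        rw [ih (N-1) (by omega)]
        congr 1
        ring
      rw [hA, hAt, hAf, hE, hEt, hEf, ih1, ih2]
      have f1 := cntE_add_cntF n (a := (-N-1:ℤ)) (b := (N-1:ℤ)) (by omega)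
      have f2 := cntE_add_cntF n (a := (-N+1:ℤ)) (b := (N+1:ℤ)) (by omega)
      have f3 := cntE_add_cntF n (a := (-N-1:ℤ)) (b := (N+1:ℤ)) (by omega)
      have f4 := cntE_add_cntF n (a := (-N+1:ℤ)) (b := (N-1:ℤ)) (by omega)
      have fmono : cntF n (-N-1) ≤ cntF n (-N+1) := by
        unfold cntF
        apply Finset.card_le_card
        apply Finset.monotone_filter_right
        intro l _ h
        omega
      omega

lemma good_iff (l : List Bool) : ∀ N : ℤ,
    (good N l = true ↔ ∀ t, 1 ≤ t → t ≤ l.length → -N < wsum (l.take t)) := by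
  induction l with
  | nil =>
    intro N
    exact ⟨fun _ t ht1 ht2 => by simp at ht2; omega, fun _ => rfl⟩
  | cons b l ih =>
    intro N
    simp only [good_cons, Bool.and_eq_true, decide_eq_true_eq, List.length_cons]
    rw [ih (N + step b)]
    constructor
    · rintro ⟨h1, h2⟩ t ht1 ht2
      cases t with
      | zero => omega
      | succ t =>
        simp only [List.take_succ_cons, wsum_cons]
        rcases Nat.eq_zero_or_pos t with rfl | htpos
        · simpa using h1
        · have := h2 t htpos (by omega)
          omega
    · intro h
      refine ⟨by simpa using h 1 le_rfl (by omega), ?_⟩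
      intro t ht1 ht2
      have := h (t+1) (by omega) (by omega)
      simp only [List.take_succ_cons, wsum_cons] at this
      omega

lemma wsum_take_ofFn (n : ℕ) (g : ℕ → Bool) : ∀ t, t ≤ n →
    wsum ((List.ofFn (fun j : Fin n => g j)).take t) = ∑ j ∈ Finset.range t, step (g j) := by
  intro t
  induction t with
  | zero => simp [wsum]
  | succ t iht =>
    intro ht
    rw [Finset.sum_range_succ, ← iht (by omega)]
    have h : (List.ofFn (fun j : Fin n => g j)).take (t+1)
        = (List.ofFn (fun j : Fin n => g j)).take t ++ [g t] := by
      rw [List.take_succ]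
      congr
      simp [List.ofFnNthVal, Nat.lt_of_succ_le ht]
    rw [h]
    simp [wsum]


def rstep (b : Bool) : ℝ := if b then 1 else -1
@[simp] lemma rstep_true : rstep true = 1 := rfl
@[simp] lemma rstep_false : rstep false = -1 := rfl
lemma rstep_eq_cast (b : Bool) : rstep b = (step b : ℝ) := by cases b <;> simp

variable {Ω : Type*} [MeasureSpace Ω] [IsProbabilityMeasure (ℙ : Measure Ω)]

def emb : ℕ ↪ {i : ℕ // 2 ≤ i} :=
  ⟨fun j => ⟨j+2, by omega⟩, by intro a b h; simpa using congrArg Subtype.val h⟩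
@[simp] lemma emb_apply (j : ℕ) : ((emb j : {i : ℕ // 2 ≤ i}) : ℕ) = j + 2 := rfl

def patSet (X : ℕ → Ω → ℝ) (n : ℕ) (l : List Bool) : Set Ω :=
  ⋂ j ∈ Finset.range n, {ω | X (j+2) ω = rstep (l.getD j true)}

lemma patSet_meas (X : ℕ → Ω → ℝ) (hmeas : ∀ k, Measurable (X k)) (n : ℕ) (l : List Bool) :
    MeasurableSet (patSet X n l) := by
  apply Finset.measurableSet_biInter
  intro j _
  exact (hmeas (j+2)) (measurableSet_singleton _)

lemma pat_prob (X : ℕ → Ω → ℝ)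
    (hind : iIndepFun
      (fun i : {i : ℕ // 2 ≤ i} => X i) ℙ)
    (hRad : ∀ k : ℕ, 2 ≤ k →
      ℙ {ω | X k ω = 1} = ENNReal.ofReal (1 / 2) ∧
      ℙ {ω | X k ω = -1} = ENNReal.ofReal (1 / 2))
    (n : ℕ) (l : List Bool) :
    ℙ (patSet X n l) = (ENNReal.ofReal (1/2))^n := by
  have key := hind.measure_inter_preimage_eq_mul ((Finset.range n).map emb)
    (sets := fun i => {rstep (l.getD (i.val - 2) true)})
    (fun i _ => measurableSet_singleton _)
  have hset : (⋂ i ∈ (Finset.range n).map emb,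
      (fun ω => X i.val ω) ⁻¹' {rstep (l.getD (i.val - 2) true)}) = patSet X n l := by
    ext ω
    constructor
    · intro hω
      apply Set.mem_iInter₂.mpr
      intro j hj
      rw [Finset.mem_range] at hj
      have hm : emb j ∈ (Finset.range n).map emb :=
        Finset.mem_map_of_mem _ (Finset.mem_range.2 hj)
      have h := Set.mem_iInter₂.mp hω (emb j) hm
      simpa using h
    · intro hω
      apply Set.mem_iInter₂.mpr
      rintro i hi
      rw [Finset.mem_map] at hi
      obtain ⟨j, hj, rfl⟩ := hi
      have h := Set.mem_iInter₂.mp hω j hj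
      simpa using h
  rw [hset] at key
  rw [key, Finset.prod_map]
  have hfac : ∀ j ∈ Finset.range n,
      ℙ ((fun ω => X ((emb j).val) ω) ⁻¹' {rstep (l.getD ((emb j).val - 2) true)})
        = ENNReal.ofReal (1/2) := by
    intro j _
    have h2 : ((emb j).val) = j + 2 := rfl
    simp only [h2, Nat.add_sub_cancel]
    cases hb : l.getD j true
    · simpa [Set.preimage, Set.mem_singleton_iff] using (hRad (j+2) (by omega)).2
    · simpa [Set.preimage, Set.mem_singleton_iff] using (hRad (j+2) (by omega)).1
  rw [Finset.prod_congr rfl hfac, Finset.prod_const, Finset.card_range]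

lemma bad_null (X : ℕ → Ω → ℝ) (hmeas : ∀ k, Measurable (X k))
    (hRad : ∀ k : ℕ, 2 ≤ k →
      ℙ {ω | X k ω = 1} = ENNReal.ofReal (1 / 2) ∧
      ℙ {ω | X k ω = -1} = ENNReal.ofReal (1 / 2))
    (k : ℕ) (hk : 2 ≤ k) :
    ℙ {ω | ¬(X k ω = 1 ∨ X k ω = -1)} = 0 := by
  have hA : MeasurableSet {ω | X k ω = 1} := (hmeas k) (measurableSet_singleton 1)
  have hB : MeasurableSet {ω | X k ω = -1} := (hmeas k) (measurableSet_singleton (-1))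
  have hdisj : Disjoint {ω | X k ω = 1} {ω | X k ω = -1} := by
    rw [Set.disjoint_left]
    intro ω h1 h2
    simp only [Set.mem_setOf_eq] at h1 h2
    rw [h1] at h2
    norm_num at h2
  have hunion : ℙ ({ω | X k ω = 1} ∪ {ω | X k ω = -1}) = 1 := by
    rw [measure_union hdisj hB, (hRad k hk).1, (hRad k hk).2,
      ← ENNReal.ofReal_add (by norm_num) (by norm_num)]
    norm_num
  have hc : {ω | ¬(X k ω = 1 ∨ X k ω = -1)} = ({ω | X k ω = 1} ∪ {ω | X k ω = -1})ᶜ := by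
    ext ω; simp [Set.mem_union]
  rw [hc, measure_compl (hA.union hB) (measure_ne_top _ _), hunion, measure_univ]
  simp


lemma master (X : ℕ → Ω → ℝ) (hmeas : ∀ k, Measurable (X k))
    (hind : iIndepFun
      (fun i : {i : ℕ // 2 ≤ i} => X i) ℙ)
    (hRad : ∀ k : ℕ, 2 ≤ k →
      ℙ {ω | X k ω = 1} = ENNReal.ofReal (1 / 2) ∧
      ℙ {ω | X k ω = -1} = ENNReal.ofReal (1 / 2))
    (n : ℕ) (E : Set Ω) (Q : List Bool → Prop) [DecidablePred Q]
    (hEQ : ∀ ω, (∀ j, j < n → (X (j+2) ω = 1 ∨ X (j+2) ω = -1)) →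
      (ω ∈ E ↔ Q (List.ofFn (fun j : Fin n => decide (X (j.val+2) ω = 1))))) :
    ℙ E = ((paths n).filter Q).card * (ENNReal.ofReal (1/2))^n := by
  classical
  set G : Set Ω := {ω | ∀ j, j < n → (X (j+2) ω = 1 ∨ X (j+2) ω = -1)} with hGdef
  have hGc : ℙ Gᶜ = 0 := by
    have hsub : Gᶜ ⊆ ⋃ j ∈ Finset.range n, {ω | ¬(X (j+2) ω = 1 ∨ X (j+2) ω = -1)} := by
      intro ω hω
      simp only [hGdef, Set.mem_compl_iff, Set.mem_setOf_eq, not_forall] at hω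
      obtain ⟨j, hj, hbad⟩ := hω
      exact Set.mem_biUnion (Finset.mem_range.mpr hj) hbad
    apply measure_mono_null hsub
    apply (measure_biUnion_null_iff (Finset.range n).countable_toSet).mpr
    intro j _
    exact bad_null X hmeas hRad (j+2) (by omega)
  have hEG : ℙ E = ℙ (E ∩ G) := by
    apply le_antisymm
    · calc ℙ E = ℙ ((E ∩ G) ∪ (E ∩ Gᶜ)) := by rw [Set.inter_union_compl]
      _ ≤ ℙ (E ∩ G) + ℙ (E ∩ Gᶜ) := measure_union_le _ _
      _ ≤ ℙ (E ∩ G) + 0 := by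
          gcongr
          exact le_of_eq (measure_mono_null Set.inter_subset_right hGc)
      _ = ℙ (E ∩ G) := add_zero _
    · exact measure_mono Set.inter_subset_left
  have hpatG : ∀ l ∈ (paths n).filter Q, ∀ ω ∈ patSet X n l,
      (∀ j, j < n → X (j+2) ω = rstep (l.getD j true)) := by
    intro l _ ω hω j hj
    have := Set.mem_iInter₂.mp hω j (Finset.mem_range.2 hj)
    simpa using this
  have hdecomp : E ∩ G = ⋃ l ∈ (paths n).filter Q, patSet X n l := by
    ext ω
    constructor
    · rintro ⟨hE, hG⟩
      set l : List Bool := List.ofFn (fun j : Fin n => decide (X (j.val+2) ω = 1)) with hl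
      have hQl : Q l := (hEQ ω hG).mp hE
      have hlp : l ∈ (paths n).filter Q := by
        rw [Finset.mem_filter]
        exact ⟨mem_paths.2 (by simp [hl]), hQl⟩
      refine Set.mem_biUnion hlp ?_
      apply Set.mem_iInter₂.mpr
      intro j hj
      rw [Finset.mem_range] at hj
      have hgetD : l.getD j true = decide (X (j+2) ω = 1) := by
        rw [List.getD_eq_getElem l true (by simp [hl]; omega)]
        simp [hl]
      simp only [Set.mem_setOf_eq]
      rw [hgetD]
      rcases hG j hj with h1 | h2
      · simp [h1]
      · have hne : X (j+2) ω ≠ 1 := by rw [h2]; norm_num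
        have hdec : decide (X (j+2) ω = 1) = false := decide_eq_false hne
        rw [hdec, rstep_false]
        exact h2
    · intro hω
      rw [Set.mem_iUnion₂] at hω
      obtain ⟨l, hlQ, hmem⟩ := hω
      have hcoord := hpatG l hlQ ω hmem
      have hG : ω ∈ G := by
        intro j hj
        rcases Bool.eq_false_or_eq_true (l.getD j true) with hb | hb <;>
          [left; right] <;> rw [hcoord j hj, hb] <;> simp
      refine ⟨?_, hG⟩
      rw [Finset.mem_filter] at hlQ
      have hlen : l.length = n := mem_paths.1 hlQ.1
      have hpat : List.ofFn (fun j : Fin n => decide (X (j.val+2) ω = 1)) = l := by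
        apply List.ext_getElem (by simp [hlen])
        intro j h1 h2
        rw [List.getElem_ofFn]
        have hj : j < n := by simpa using h1
        have hD : l.getD j true = l[j] := List.getD_eq_getElem l true h2
        have hXj : X (j+2) ω = rstep l[j] := by rw [hcoord j hj, hD]
        rcases Bool.eq_false_or_eq_true l[j] with hb | hb
        · rw [hb] at hXj ⊢
          simp only [rstep_true] at hXj
          simp [hXj]
        · rw [hb] at hXj ⊢
          simp only [rstep_false] at hXj
          simp only [decide_eq_false_iff_not]
          rw [hXj]
          norm_num
      exact (hEQ ω hG).mpr (by rw [hpat]; exact hlQ.2)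
  have hdisj : (↑((paths n).filter Q) : Set (List Bool)).PairwiseDisjoint (patSet X n ·) := by
    intro l hl l' hl' hne
    simp only [Finset.coe_filter, Set.mem_setOf_eq] at hl hl'
    have hlen : l.length = n := mem_paths.1 hl.1
    have hlen' : l'.length = n := mem_paths.1 hl'.1
    rw [Function.onFun, Set.disjoint_left]
    intro ω hω hω'
    apply hne
    apply List.ext_getElem (by omega)
    intro j h1 h2
    have hj : j < n := by omega
    have c1 : X (j+2) ω = rstep (l.getD j true) := by
      have := Set.mem_iInter₂.mp hω j (Finset.mem_range.2 hj)
      simpa using this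
    have c2 : X (j+2) ω = rstep (l'.getD j true) := by
      have := Set.mem_iInter₂.mp hω' j (Finset.mem_range.2 hj)
      simpa using this
    have : rstep (l.getD j true) = rstep (l'.getD j true) := by rw [← c1, ← c2]
    rw [List.getD_eq_getElem l true h1, List.getD_eq_getElem l' true h2] at this
    rcases Bool.eq_false_or_eq_true l[j] with hb | hb <;>
      rcases Bool.eq_false_or_eq_true l'[j] with hb' | hb' <;>
      rw [hb, hb'] <;> rw [hb, hb'] at this <;> simp at this <;> try rfl
    all_goals norm_num at this
  rw [hEG, hdecomp, measure_biUnion_finset hdisj (fun l _ => patSet_meas X hmeas n l)]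
  rw [Finset.sum_congr rfl (fun l _ => pat_prob X hind hRad n l), Finset.sum_const,
    nsmul_eq_mul]


lemma umin_iff {Ω : Type*} (X : ℕ → Ω → ℝ) {m N : ℕ} (hm : 1 ≤ m) (hN : 1 ≤ N) (ω : Ω) :
    (0 < (N : ℝ) + rwUmin X m ω) ↔ ∀ i ∈ Set.Icc 2 m, -(N : ℝ) < rwU X i ω := by
  have hN' : (1:ℝ) ≤ (N:ℝ) := by exact_mod_cast hN
  rcases eq_or_lt_of_le hm with h1 | h2
  · obtain rfl : m = 1 := h1.symm
    have he : Set.Icc 2 1 = (∅ : Set ℕ) := Set.Icc_eq_empty (by omega)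
    simp only [rwUmin, he, Set.image_empty, Real.sInf_empty]
    constructor
    · intro _ i hi
      simp [he] at hi
    · intro _
      linarith
  · have hmem : (2:ℕ) ∈ Set.Icc 2 m := Set.mem_Icc.2 (by omega)
    have hne : ((fun i => rwU X i ω) '' Set.Icc 2 m).Nonempty :=
      ⟨_, Set.mem_image_of_mem _ hmem⟩
    have hfin : ((fun i => rwU X i ω) '' Set.Icc 2 m).Finite :=
      (Set.finite_Icc _ _).image _
    have hmemInf : rwUmin X m ω ∈ (fun i => rwU X i ω) '' Set.Icc 2 m :=
      hne.csInf_mem hfin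
    have hbdd : BddBelow ((fun i => rwU X i ω) '' Set.Icc 2 m) := hfin.bddBelow
    constructor
    · intro h i hi
      have hle : rwUmin X m ω ≤ rwU X i ω := csInf_le hbdd (Set.mem_image_of_mem _ hi)
      linarith
    · intro h
      obtain ⟨i, hi, hEq⟩ := hmemInf
      have := h i hi
      have : -(N:ℝ) < rwUmin X m ω := by rw [← hEq]; exact this
      linarith

section Main

variable {Ω : Type*} [MeasureSpace Ω] [IsProbabilityMeasure (ℙ : Measure Ω)]

lemma rwU_pattern (X : ℕ → Ω → ℝ) {n : ℕ} (ω : Ω)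
    (hG : ∀ j, j < n → (X (j+2) ω = 1 ∨ X (j+2) ω = -1))
    (i : ℕ) (him : i ≤ n + 1) :
    rwU X i ω
      = ((wsum ((List.ofFn (fun j : Fin n => decide (X (j.val+2) ω = 1))).take (i-1)) : ℤ) : ℝ) := by
  rcases Nat.lt_or_ge i 2 with hi2 | h2i
  · have hi1 : i - 1 = 0 := by omega
    have hIe : Finset.Icc 2 i = ∅ := Finset.Icc_eq_empty (by omega)
    show (∑ t ∈ Finset.Icc 2 i, X t ω) = _
    rw [hi1, hIe]
    simp
  set g : ℕ → Bool := fun j => decide (X (j+2) ω = 1) with hg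
  have hfn : (fun j : Fin n => decide (X (j.val+2) ω = 1)) = (fun j : Fin n => g j.val) := rfl
  rw [hfn, wsum_take_ofFn n g (i-1) (by omega)]
  have hXval : ∀ t ∈ Finset.Icc 2 i, X t ω = rstep (g (t-2)) := by
    intro t ht
    rw [Finset.mem_Icc] at ht
    have hj : t - 2 < n := by omega
    have h2 : t - 2 + 2 = t := by omega
    have hgt : g (t - 2) = decide (X t ω = 1) := by
      simp only [hg]
      rw [h2]
    rcases hG (t-2) hj with h | h
    · rw [h2] at h
      rw [hgt, h]
      simp
    · rw [h2] at h
      have hd : decide (X t ω = 1) = false := decide_eq_false (by rw [h]; norm_num)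
      rw [hgt, hd, rstep_false, h]
  show (∑ t ∈ Finset.Icc 2 i, X t ω) = _
  rw [Finset.sum_congr rfl hXval]
  have hIcc : Finset.Icc 2 i
      = (Finset.range (i-1)).map ⟨fun j => 2 + j, fun a b h => by simpa using h⟩ := by
    ext t
    simp only [Finset.mem_Icc, Finset.mem_map, Finset.mem_range, Function.Embedding.coeFn_mk]
    dsimp only [DFunLike.coe]
    constructor
    · intro ht; exact ⟨t - 2, by omega, by omega⟩
    · rintro ⟨j, hj, rfl⟩; omega
  rw [hIcc, Finset.sum_map]
  push_cast
  apply Finset.sum_congr rfl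
  intro j hj
  dsimp only [DFunLike.coe]
  have h2j : 2 + j - 2 = j := by omega
  rw [h2j, rstep_eq_cast]

theorem stmt_18_aux (X : ℕ → Ω → ℝ)
    (hmeas : ∀ k, Measurable (X k))
    (hind : iIndepFun
      (fun i : {i : ℕ // 2 ≤ i} => X i) ℙ)
    (hRad : ∀ k : ℕ, 2 ≤ k →
      ℙ {ω | X k ω = 1} = ENNReal.ofReal (1 / 2) ∧
      ℙ {ω | X k ω = -1} = ENNReal.ofReal (1 / 2)) :
    ∀ m N : ℕ, 1 ≤ m → 1 ≤ N →
      ℙ {ω | 0 < (N : ℝ) + rwUmin X m ω}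
        = ℙ {ω | -(N : ℝ) < rwU X m ω ∧ rwU X m ω ≤ (N : ℝ)} := by
  classical
  intro m N hm hN
  set n := m - 1 with hn
  have hmn : m = n + 1 := by omega
  have hNZ : (1:ℤ) ≤ (N:ℤ) := by exact_mod_cast hN
  have hP1 : ℙ {ω | 0 < (N : ℝ) + rwUmin X m ω}
      = (((paths n).filter (fun l => good (N:ℤ) l = true)).card : ENNReal)
        * (ENNReal.ofReal (1/2))^n := by
    apply master X hmeas hind hRad n _ (fun l => good (N:ℤ) l = true)
    intro ω hG
    set L := List.ofFn (fun j : Fin n => decide (X (j.val+2) ω = 1)) with hL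
    have hlen : L.length = n := by simp [hL]
    rw [Set.mem_setOf_eq, umin_iff X hm hN ω, good_iff L (N:ℤ), hlen]
    constructor
    · intro h t ht1 ht2
      have hi := h (t+1) (Set.mem_Icc.2 ⟨by omega, by omega⟩)
      rw [rwU_pattern X ω hG (t+1) (by omega)] at hi
      have hst : t + 1 - 1 = t := by omega
      rw [hst] at hi
      rw [← hL] at hi
      exact_mod_cast hi
    · intro h i hi
      rw [Set.mem_Icc] at hi
      rw [rwU_pattern X ω hG i (by omega), ← hL]
      have := h (i-1) (by omega) (by omega)
      exact_mod_cast this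
  have hP2 : ℙ {ω | -(N : ℝ) < rwU X m ω ∧ rwU X m ω ≤ (N : ℝ)}
      = (((paths n).filter (fun l => (-(N:ℤ)) < wsum l ∧ wsum l ≤ (N:ℤ))).card : ENNReal)
        * (ENNReal.ofReal (1/2))^n := by
    apply master X hmeas hind hRad n _ (fun l => (-(N:ℤ)) < wsum l ∧ wsum l ≤ (N:ℤ))
    intro ω hG
    set L := List.ofFn (fun j : Fin n => decide (X (j.val+2) ω = 1)) with hL
    have hlen : L.length = n := by simp [hL]
    have hm1 : m - 1 = n := rfl
    have hUm : rwU X m ω = ((wsum L : ℤ) : ℝ) := by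
      rw [rwU_pattern X ω hG m (by omega), ← hL, hm1,
        List.take_of_length_le (le_of_eq hlen)]
    rw [Set.mem_setOf_eq, hUm]
    constructor
    · intro hh
      exact ⟨by exact_mod_cast hh.1, by exact_mod_cast hh.2⟩
    · intro hh
      exact ⟨by exact_mod_cast hh.1, by exact_mod_cast hh.2⟩
  rw [hP1, hP2]
  congr 2
  have h1 : ((paths n).filter (fun l => good (N:ℤ) l = true)).card = cntA n (N:ℤ) := rfl
  have h2 : ((paths n).filter (fun l => (-(N:ℤ)) < wsum l ∧ wsum l ≤ (N:ℤ))).card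
      = cntE n (-(N:ℤ)) (N:ℤ) := rfl
  rw [h1, h2, main_count n (N:ℤ) hNZ]

end Main

end Stmt18

/-- reflection identity: for the simple symmetric random walk
`U_m = X_2 + … + X_m`, for all `m, N ≥ 1`,
`P(N + min_{2≤i≤m} U_i > 0) = P(-N < U_m ≤ N)`. -/
theorem stmt_18 {Ω : Type*} [MeasureSpace Ω] [IsProbabilityMeasure (ℙ : Measure Ω)]
    (X : ℕ → Ω → ℝ)
    (hmeas : ∀ k, Measurable (X k))
    (hind : iIndepFun
      (fun i : {i : ℕ // 2 ≤ i} => X i) ℙ)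
    (hRad : ∀ k : ℕ, 2 ≤ k →
      ℙ {ω | X k ω = 1} = ENNReal.ofReal (1 / 2) ∧
      ℙ {ω | X k ω = -1} = ENNReal.ofReal (1 / 2)) :
    ∀ m N : ℕ, 1 ≤ m → 1 ≤ N →
      ℙ {ω | 0 < (N : ℝ) + rwUmin X m ω}
        = ℙ {ω | -(N : ℝ) < rwU X m ω ∧ rwU X m ω ≤ (N : ℝ)} :=
  Stmt18.stmt_18_aux X hmeas hind hRad
end
end
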